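/- arXiv:1708.02397 — 3 statements merged into one kernel-verified Lean document; each statement's English description precedes it below -/
import Mathlib

section
/- For the star graph S_n on n ≥ 2 vertices (one center joined to n − 1 leaves), the harmonic index of its total graph satisfies H(T(S_n)) = (n − 1)·(1/2 + 2/(3n − 2) + 2/(n + 2)). -/
open scoped Classical

/-- The total graph `T(G)` of a simple graph `G`: its vertex set is `V(G) ∪ E(G)`,
and two vertices of `T(G)` are adjacent iff the corresponding elements of `G`
are adjacent vertices, adjacent (distinct, sharing an endpoint) edges, or an
incident vertex–edge pair. -/
def SimpleGraph.totalGraph {V : Type*} (G : SimpleGraph V) :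
    SimpleGraph (V ⊕ G.edgeSet) where
  Adj x y :=
    match x, y with
    | Sum.inl u, Sum.inl v => G.Adj u v
    | Sum.inl u, Sum.inr e => u ∈ (e : Sym2 V)
    | Sum.inr e, Sum.inl u => u ∈ (e : Sym2 V)
    | Sum.inr e, Sum.inr f => e ≠ f ∧ ∃ v, v ∈ (e : Sym2 V) ∧ v ∈ (f : Sym2 V)
  symm := by
    constructor
    rintro (u | e) (v | f) h
    · exact h.symm
    · exact h
    · exact h
    · exact ⟨h.1.symm, h.2.imp fun v hv => ⟨hv.2, hv.1⟩⟩
  loopless := by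
    constructor
    rintro (u | e) h
    · exact G.irrefl h
    · exact h.1 rfl

/-- The harmonic index `H(G) = ∑_{uv ∈ E(G)} 2 / (deg u + deg v)`. -/
noncomputable def SimpleGraph.harmonicIndex {V : Type*} [Fintype V] (G : SimpleGraph V) : ℝ :=
  ∑ e ∈ G.edgeFinset,
    Sym2.lift ⟨fun u v => 2 / ((G.degree u : ℝ) + (G.degree v : ℝ)),
      fun u v => by simp [add_comm]⟩ e

open Finset

lemma sum_edgeFinset_lift {V : Type*} [Fintype V] (G : SimpleGraph V)
    (F : V → V → ℝ) (hF : ∀ u v, F u v = F v u) :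
    ∑ e ∈ G.edgeFinset, Sym2.lift ⟨F, hF⟩ e
      = (∑ x : V, ∑ y : V, if G.Adj x y then F x y else 0) / 2 := by
  classical
  have h1 : (∑ x : V, ∑ y : V, if G.Adj x y then F x y else 0)
      = ∑ d : G.Dart, F d.fst d.snd := by
    have h0 : ∀ x : V, (∑ y : V, if G.Adj x y then F x y else 0)
        = ∑ y ∈ univ.filter (G.Adj x), F x y := by
      intro x; rw [Finset.sum_filter]
    simp_rw [h0]
    rw [Finset.sum_sigma']
    refine Finset.sum_bij'
      (fun p hp => (⟨(p.1, p.2), (Finset.mem_filter.mp (Finset.mem_sigma.mp hp).2).2⟩ : G.Dart))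
      (fun d _ => ⟨d.fst, d.snd⟩) (fun _ _ => Finset.mem_univ _)
      (fun d _ => by simp [d.adj]) (fun p hp => rfl) (fun d _ => rfl) (fun p hp => rfl)
  have h2 : ∑ d : G.Dart, F d.fst d.snd = ∑ e ∈ G.edgeFinset, 2 * Sym2.lift ⟨F, hF⟩ e := by
    rw [← Finset.sum_fiberwise_of_maps_to
      (g := SimpleGraph.Dart.edge) (t := G.edgeFinset)
      (fun d _ => by rw [SimpleGraph.mem_edgeFinset]; exact d.edge_mem)]
    refine Finset.sum_congr rfl fun e he => ?_
    have hcard : #(univ.filter (fun d : G.Dart => d.edge = e)) = 2 :=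
      G.dart_edge_fiber_card e (SimpleGraph.mem_edgeFinset.mp he)
    calc ∑ d ∈ univ.filter (fun d : G.Dart => d.edge = e), F d.fst d.snd
        = ∑ _d ∈ univ.filter (fun d : G.Dart => d.edge = e), Sym2.lift ⟨F, hF⟩ e := by
          refine Finset.sum_congr rfl fun d hd => ?_
          rw [← (Finset.mem_filter.mp hd).2]
          rfl
      _ = 2 * Sym2.lift ⟨F, hF⟩ e := by rw [Finset.sum_const, hcard]; simp [mul_comm]
  rw [h1, h2, ← Finset.mul_sum]
  ring

theorem aux (m : ℕ) (hm : 1 ≤ m) :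
    (completeBipartiteGraph (Fin 1) (Fin m)).totalGraph.harmonicIndex
      = (m : ℝ) * (1 / 2 + 2 / (3 * (m : ℝ) + 1) + 2 / ((m : ℝ) + 3)) := by
  classical
  set G := completeBipartiteGraph (Fin 1) (Fin m) with hG
  -- edges of G
  have hmem : ∀ i : Fin m, s(Sum.inl 0, (Sum.inr i : Fin 1 ⊕ Fin m)) ∈ G.edgeSet := by
    intro i; simp [hG, SimpleGraph.mem_edgeSet]
  have hedge : ∀ e : G.edgeSet,
      ∃ i : Fin m, (e : Sym2 (Fin 1 ⊕ Fin m)) = s(Sum.inl 0, Sum.inr i) := by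
    rintro ⟨e, he⟩
    induction e with
    | _ a b =>
      rw [SimpleGraph.mem_edgeSet] at he
      match a, b with
      | Sum.inl a, Sum.inl b => simp [hG] at he
      | Sum.inr a, Sum.inr b => simp [hG] at he
      | Sum.inl a, Sum.inr b => exact ⟨b, by simp [Subsingleton.elim a 0]⟩
      | Sum.inr a, Sum.inl b => exact ⟨a, by show s(Sum.inr a, Sum.inl b) = _; rw [Sym2.eq_swap]; simp [Subsingleton.elim b 0]⟩
  set EE : Fin m ≃ G.edgeSet := Equiv.ofBijective
    (fun i => ⟨s(Sum.inl 0, Sum.inr i), hmem i⟩)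
    ⟨fun i j h => by simpa [Subtype.ext_iff, Sym2.eq_iff] using h,
     fun e => by obtain ⟨i, hi⟩ := hedge e; exact ⟨i, Subtype.ext hi.symm⟩⟩ with hEE
  have hEEc : ∀ i, ((EE i : G.edgeSet) : Sym2 (Fin 1 ⊕ Fin m)) = s(Sum.inl 0, Sum.inr i) :=
    fun i => rfl
  -- adjacency characterizations
  have adj11 : ∀ u v : Fin 1 ⊕ Fin m,
      G.totalGraph.Adj (Sum.inl u) (Sum.inl v) ↔ G.Adj u v := fun _ _ => Iff.rfl
  have adj12 : ∀ (u : Fin 1 ⊕ Fin m) (e : G.edgeSet),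
      G.totalGraph.Adj (Sum.inl u) (Sum.inr e) ↔ u ∈ (e : Sym2 (Fin 1 ⊕ Fin m)) :=
    fun _ _ => Iff.rfl
  have adj21 : ∀ (e : G.edgeSet) (u : Fin 1 ⊕ Fin m),
      G.totalGraph.Adj (Sum.inr e) (Sum.inl u) ↔ u ∈ (e : Sym2 (Fin 1 ⊕ Fin m)) :=
    fun _ _ => Iff.rfl
  have adj22 : ∀ e f : G.edgeSet,
      G.totalGraph.Adj (Sum.inr e) (Sum.inr f) ↔ e ≠ f ∧
        ∃ v, v ∈ (e : Sym2 (Fin 1 ⊕ Fin m)) ∧ v ∈ (f : Sym2 (Fin 1 ⊕ Fin m)) :=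
    fun _ _ => Iff.rfl
  have hadjCC : ∀ a : Fin 1, ¬ G.totalGraph.Adj (Sum.inl (Sum.inl 0)) (Sum.inl (Sum.inl a)) := by
    intro a; rw [adj11]; simp [hG]
  have hadjCL : ∀ j : Fin m, G.totalGraph.Adj (Sum.inl (Sum.inl 0)) (Sum.inl (Sum.inr j)) := by
    intro j; rw [adj11]; simp [hG]
  have hadjLC : ∀ j : Fin m, G.totalGraph.Adj (Sum.inl (Sum.inr j)) (Sum.inl (Sum.inl 0)) := by
    intro j; rw [adj11]; simp [hG]
  have hadjLL : ∀ j j' : Fin m,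
      ¬ G.totalGraph.Adj (Sum.inl (Sum.inr j)) (Sum.inl (Sum.inr j')) := by
    intro j j'; rw [adj11]; simp [hG]
  have hadjCE : ∀ i : Fin m, G.totalGraph.Adj (Sum.inl (Sum.inl 0)) (Sum.inr (EE i)) := by
    intro i; rw [adj12, hEEc]; simp
  have hadjEC : ∀ i : Fin m, G.totalGraph.Adj (Sum.inr (EE i)) (Sum.inl (Sum.inl 0)) := by
    intro i; rw [adj21, hEEc]; simp
  have hadjLE : ∀ j i : Fin m,
      G.totalGraph.Adj (Sum.inl (Sum.inr j)) (Sum.inr (EE i)) ↔ j = i := by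
    intro j i; rw [adj12, hEEc, Sym2.mem_iff]; simp
  have hadjEL : ∀ i j : Fin m,
      G.totalGraph.Adj (Sum.inr (EE i)) (Sum.inl (Sum.inr j)) ↔ j = i := by
    intro i j; rw [adj21, hEEc, Sym2.mem_iff]; simp
  have hadjEE : ∀ i j : Fin m,
      G.totalGraph.Adj (Sum.inr (EE i)) (Sum.inr (EE j)) ↔ i ≠ j := by
    intro i j
    rw [adj22]
    constructor
    · rintro ⟨hne, -⟩ rfl; exact hne rfl
    · intro hij
      exact ⟨fun h => hij (EE.injective h), ⟨Sum.inl 0, by rw [hEEc]; simp, by rw [hEEc]; simp⟩⟩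
  -- degree formula
  have hdeg : ∀ x : (Fin 1 ⊕ Fin m) ⊕ G.edgeSet,
      G.totalGraph.degree x = ∑ y, if G.totalGraph.Adj x y then 1 else 0 := by
    intro x
    rw [SimpleGraph.degree, SimpleGraph.neighborFinset_eq_filter, Finset.card_filter]
  have expand : ∀ f : ((Fin 1 ⊕ Fin m) ⊕ G.edgeSet) → ℕ,
      ∑ x, f x = f (Sum.inl (Sum.inl 0)) + ∑ j : Fin m, f (Sum.inl (Sum.inr j))
        + ∑ i : Fin m, f (Sum.inr (EE i)) := by
    intro f
    rw [Fintype.sum_sum_type, Fintype.sum_sum_type, ← EE.sum_comp (fun e => f (Sum.inr e))]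
    simp
  have expandR : ∀ f : ((Fin 1 ⊕ Fin m) ⊕ G.edgeSet) → ℝ,
      ∑ x, f x = f (Sum.inl (Sum.inl 0)) + ∑ j : Fin m, f (Sum.inl (Sum.inr j))
        + ∑ i : Fin m, f (Sum.inr (EE i)) := by
    intro f
    rw [Fintype.sum_sum_type, Fintype.sum_sum_type, ← EE.sum_comp (fun e => f (Sum.inr e))]
    simp
  have hdC : G.totalGraph.degree (Sum.inl (Sum.inl 0)) = 2 * m := by
    rw [hdeg, expand]
    simp [hadjCC, hadjCL, hadjCE, two_mul]
  have hdL : ∀ j : Fin m, G.totalGraph.degree (Sum.inl (Sum.inr j)) = 2 := by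
    intro j
    rw [hdeg, expand]
    simp [hadjLC, hadjLL, hadjLE]
  have hdE : ∀ i : Fin m, G.totalGraph.degree (Sum.inr (EE i)) = m + 1 := by
    intro i
    rw [hdeg, expand]
    have h2 : (∑ j : Fin m, if G.totalGraph.Adj (Sum.inr (EE i)) (Sum.inr (EE j)) then 1 else 0)
        = m - 1 := by
      simp only [hadjEE]
      rw [Finset.sum_ite, Finset.sum_const, Finset.sum_const]
      have : univ.filter (fun j => i ≠ j) = univ.erase i := by
        ext j; simp [ne_comm]
      rw [this, Finset.card_erase_of_mem (Finset.mem_univ i)]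
      simp
    rw [h2]
    simp only [hadjEC, hadjEL, if_true]
    have h1 : (∑ j : Fin m, if j = i then 1 else 0) = 1 := by
      rw [Finset.sum_ite_eq' univ i (fun _ => 1)]; simp
    rw [h1]
    omega
  have hsing : ∀ (c : ℝ) (i : Fin m),
      (∑ j : Fin m, if i = j then 0 else c) = ((m : ℝ) - 1) * c := by
    intro c i
    have hj : ∀ j : Fin m, (if i = j then (0:ℝ) else c) = c - (if i = j then c else 0) := by
      intro j; rcases eq_or_ne i j with h | h <;> simp [h]
    rw [Finset.sum_congr rfl (fun j _ => hj j), Finset.sum_sub_distrib, Finset.sum_const,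
      Finset.sum_ite_eq univ i (fun _ => c)]
    simp
    ring
  rw [SimpleGraph.harmonicIndex, sum_edgeFinset_lift, expandR]
  simp only [expandR]
  simp only [hadjCC, hadjCL, hadjCE, hadjLC, hadjLL, hadjLE, hadjEC, hadjEL, hadjEE,
    if_true, if_false, ite_true, ite_false, iff_true]
  simp only [hdC, hdL, hdE]
  push_cast
  simp only [ne_eq, ite_not]
  simp only [hsing, Finset.sum_ite_eq, Finset.sum_ite_eq', Finset.mem_univ, if_true]
  simp only [Finset.sum_const, Finset.card_univ, Fintype.card_fin, nsmul_eq_mul]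
  have d1 : (2 * (m : ℝ) + 2) ≠ 0 := by positivity
  have d2 : (3 * (m : ℝ) + 1) ≠ 0 := by positivity
  have d3 : ((m : ℝ) + 3) ≠ 0 := by positivity
  field_simp
  ring

/-- For the star graph `S_n` on `n ≥ 2` vertices (one center joined to `n - 1` leaves,
i.e. `K_{1,n-1}`), `H(T(S_n)) = (n - 1)·(1/2 + 2/(3n - 2) + 2/(n + 2))`. -/
theorem harmonicIndex_totalGraph_star (n : ℕ) (hn : 2 ≤ n) :
    (completeBipartiteGraph (Fin 1) (Fin (n - 1))).totalGraph.harmonicIndex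
      = ((n : ℝ) - 1) * (1 / 2 + 2 / (3 * (n : ℝ) - 2) + 2 / ((n : ℝ) + 2)) := by
  rw [aux (n - 1) (by omega)]
  have h1 : ((n - 1 : ℕ) : ℝ) = (n : ℝ) - 1 := by
    push_cast [Nat.cast_sub (by omega : 1 ≤ n)]; ring
  rw [h1]
  ring
end

section
/- Let G be a k-regular finite simple graph on n vertices (k ≥ 1). Then the harmonic index of its total graph satisfies H(T(G)) = n(k + 2)/4. -/
open scoped Classical

lemma harmonicIndex_regular {V : Type*} [Fintype V] (G : SimpleGraph V) (d : ℕ)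
    (hd : 0 < d) (h : G.IsRegularOfDegree d) :
    G.harmonicIndex = (G.edgeFinset.card : ℝ) / d := by
  have key : ∀ e : Sym2 V,
      Sym2.lift ⟨fun u v => 2 / ((G.degree u : ℝ) + (G.degree v : ℝ)),
        fun u v => by simp [add_comm]⟩ e = 1 / d := by
    intro e
    induction e using Sym2.ind with
    | _ u v =>
      simp only [Sym2.lift_mk, h u, h v]
      rw [div_eq_div_iff (by positivity) (by positivity)]
      ring
  rw [SimpleGraph.harmonicIndex]
  rw [Finset.sum_congr rfl fun e _ => key e, Finset.sum_const, nsmul_eq_mul]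
  ring

lemma totalGraph_regular {V : Type*} [Fintype V] (G : SimpleGraph V) (k : ℕ)
    (hreg : G.IsRegularOfDegree k) : G.totalGraph.IsRegularOfDegree (2 * k) := by
  intro x
  rw [← SimpleGraph.card_neighborSet_eq_degree]
  cases x with
  | inl u =>
    refine (Fintype.card_congr (Equiv.subtypeSum
      (p := (· ∈ G.totalGraph.neighborSet (Sum.inl u))))).trans ?_
    rw [Fintype.card_sum]
    have h1 : Fintype.card {v : V // Sum.inl v ∈ G.totalGraph.neighborSet (Sum.inl u)} = k := by
      have : Fintype.card {v : V // Sum.inl v ∈ G.totalGraph.neighborSet (Sum.inl u)}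
          = Fintype.card (G.neighborSet u) := by
        apply Fintype.card_congr
        exact Equiv.subtypeEquivRight fun v => Iff.rfl
      rw [this, SimpleGraph.card_neighborSet_eq_degree, hreg u]
    have h2 : Fintype.card {e : G.edgeSet // Sum.inr e ∈ G.totalGraph.neighborSet (Sum.inl u)} = k := by
      have e1 : {e : G.edgeSet // Sum.inr e ∈ G.totalGraph.neighborSet (Sum.inl u)}
          ≃ {s : Sym2 V // s ∈ G.edgeSet ∧ u ∈ s} :=
        Equiv.subtypeSubtypeEquivSubtypeInter (· ∈ G.edgeSet) (u ∈ ·)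
      rw [Fintype.card_congr e1]
      have : Fintype.card {s : Sym2 V // s ∈ G.edgeSet ∧ u ∈ s}
          = Fintype.card (G.incidenceSet u) := by
        apply Fintype.card_congr
        exact Equiv.subtypeEquivRight fun s => Iff.rfl
      rw [this, SimpleGraph.card_incidenceSet_eq_degree, hreg u]
    rw [h1, h2]; ring
  | inr e =>
    obtain ⟨e, he⟩ := e
    revert he
    induction e using Sym2.ind with
    | _ a b =>
      intro he
      have hab : G.Adj a b := he
      refine (Fintype.card_congr (Equiv.subtypeSum
        (p := (· ∈ G.totalGraph.neighborSet (Sum.inr ⟨s(a, b), he⟩))))).trans ?_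
      rw [Fintype.card_sum]
      have h1 : Fintype.card
          {v : V // Sum.inl v ∈ G.totalGraph.neighborSet (Sum.inr ⟨s(a, b), he⟩)} = 2 := by
        rw [Fintype.card_subtype]
        have : (Finset.univ.filter
            fun v : V => Sum.inl v ∈ G.totalGraph.neighborSet (Sum.inr ⟨s(a, b), he⟩)) = {a, b} := by
          ext v
          simp only [Finset.mem_filter, Finset.mem_univ, true_and, Finset.mem_insert,
            Finset.mem_singleton]
          show v ∈ s(a, b) ↔ _
          rw [Sym2.mem_iff]
        rw [this, Finset.card_insert_of_notMem (by simp [hab.ne]), Finset.card_singleton]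
      have h2 : Fintype.card
          {f : G.edgeSet // Sum.inr f ∈ G.totalGraph.neighborSet (Sum.inr ⟨s(a, b), he⟩)}
          = 2 * k - 2 := by
        have e1 : {f : G.edgeSet // Sum.inr f ∈ G.totalGraph.neighborSet (Sum.inr ⟨s(a, b), he⟩)}
            ≃ {s : Sym2 V // s ∈ G.edgeSet ∧
                (s(a, b) ≠ s ∧ ∃ v, v ∈ s(a, b) ∧ v ∈ s)} := by
          refine (Equiv.subtypeEquivRight fun f => ?_).trans
            (Equiv.subtypeSubtypeEquivSubtypeInter (· ∈ G.edgeSet)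
              (fun s => s(a, b) ≠ s ∧ ∃ v, v ∈ s(a, b) ∧ v ∈ s))
          show ((⟨s(a, b), he⟩ : G.edgeSet) ≠ f ∧ _) ↔ _
          rw [Ne, Ne, Subtype.ext_iff]
        rw [Fintype.card_congr e1, Fintype.card_subtype]
        have hfil : (Finset.univ.filter fun s : Sym2 V => s ∈ G.edgeSet ∧
            (s(a, b) ≠ s ∧ ∃ v, v ∈ s(a, b) ∧ v ∈ s))
            = (G.incidenceFinset a ∪ G.incidenceFinset b).erase s(a, b) := by
          ext s
          simp only [Finset.mem_filter, Finset.mem_univ, true_and, Finset.mem_erase,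
            Finset.mem_union, SimpleGraph.mem_incidenceFinset, SimpleGraph.incidenceSet,
            Set.mem_setOf_eq, Sym2.mem_iff]
          constructor
          · rintro ⟨hs, hne, v, hv1, hv2⟩
            refine ⟨fun h => hne h.symm, ?_⟩
            rcases hv1 with rfl | rfl
            · exact Or.inl ⟨hs, hv2⟩
            · exact Or.inr ⟨hs, hv2⟩
          · rintro ⟨hne, (⟨hs, hv⟩ | ⟨hs, hv⟩)⟩
            · exact ⟨hs, fun h => hne h.symm, a, by simp, hv⟩
            · exact ⟨hs, fun h => hne h.symm, b, by simp, hv⟩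
        rw [hfil]
        have hinter : G.incidenceFinset a ∩ G.incidenceFinset b = {s(a, b)} := by
          ext s
          rw [Finset.mem_inter, SimpleGraph.mem_incidenceFinset,
            SimpleGraph.mem_incidenceFinset, ← Set.mem_inter_iff,
            G.incidenceSet_inter_incidenceSet_of_adj hab]
          simp
        have hmem : s(a, b) ∈ G.incidenceFinset a ∪ G.incidenceFinset b := by
          simp [SimpleGraph.mem_incidenceFinset, G.mk'_mem_incidenceSet_left_iff.2 hab]
        rw [Finset.card_erase_of_mem hmem, Finset.card_union,
          hinter, Finset.card_singleton, SimpleGraph.card_incidenceFinset_eq_degree,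
          SimpleGraph.card_incidenceFinset_eq_degree, hreg a, hreg b]
        omega
      rw [h1, h2]
      have hk1 : 1 ≤ k := by
        have hpos : 0 < G.degree a := (G.degree_pos_iff_exists_adj a).2 ⟨b, hab⟩
        have := hreg a
        omega
        
      omega

/-- If `G` is a `k`-regular finite simple graph on `n` vertices with `k ≥ 1`, then
`H(T(G)) = n(k + 2)/4`. -/
theorem harmonicIndex_totalGraph_regular {V : Type*} [Fintype V] (G : SimpleGraph V)
    (n k : ℕ) (hk : 1 ≤ k) (hn : Fintype.card V = n) (hreg : G.IsRegularOfDegree k) :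
    G.totalGraph.harmonicIndex = (n : ℝ) * ((k : ℝ) + 2) / 4 := by
  have htreg := totalGraph_regular G k hreg
  have hH := harmonicIndex_regular G.totalGraph (2 * k) (by omega) htreg
  -- handshake for G
  have hG : (n : ℝ) * k = 2 * G.edgeFinset.card := by
    have := G.sum_degrees_eq_twice_card_edges
    rw [Finset.sum_congr rfl fun v _ => hreg v, Finset.sum_const, smul_eq_mul,
      Finset.card_univ, hn] at this
    exact_mod_cast this
  -- handshake for T(G)
  have hT : ((n : ℝ) + G.edgeFinset.card) * (2 * k) = 2 * G.totalGraph.edgeFinset.card := by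
    have := G.totalGraph.sum_degrees_eq_twice_card_edges
    rw [Finset.sum_congr rfl fun v _ => htreg v, Finset.sum_const, smul_eq_mul,
      Finset.card_univ, Fintype.card_sum, hn] at this
    have hc : Fintype.card G.edgeSet = G.edgeFinset.card := by
      rw [SimpleGraph.edgeFinset, Set.toFinset_card]
    rw [hc] at this
    exact_mod_cast this
  rw [hH]
  have hk0 : (k : ℝ) ≠ 0 := by positivity
  have h2k : ((2 * k : ℕ) : ℝ) = 2 * k := by push_cast; ring
  rw [h2k]
  have hE : (G.totalGraph.edgeFinset.card : ℝ) = ((n : ℝ) + G.edgeFinset.card) * k := by linarith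
  rw [hE]
  have hEG : (G.edgeFinset.card : ℝ) = n * k / 2 := by linarith
  rw [hEG]
  field_simp
  ring
end

section
/- For the complete graph K_n on n ≥ 2 vertices, the harmonic index of its total graph satisfies H(T(K_n)) = n(n + 1)/4. -/
open scoped Classical

section Aux

open Finset

lemma auxCardAdjVert (n : ℕ) (u : Fin n) :
    Fintype.card {v : Fin n // (⊤ : SimpleGraph (Fin n)).Adj u v} = n - 1 := by
  calc Fintype.card {v : Fin n // (⊤ : SimpleGraph (Fin n)).Adj u v}
      = Fintype.card ((⊤ : SimpleGraph (Fin n)).neighborSet u) := Fintype.card_congr' rfl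
    _ = (⊤ : SimpleGraph (Fin n)).degree u := (⊤ : SimpleGraph (Fin n)).card_neighborSet_eq_degree u
    _ = n - 1 := by simp

lemma auxCardIncEdge (n : ℕ) (u : Fin n) :
    Fintype.card {e : ↥(⊤ : SimpleGraph (Fin n)).edgeSet // u ∈ (e : Sym2 (Fin n))} = n - 1 := by
  calc Fintype.card {e : ↥(⊤ : SimpleGraph (Fin n)).edgeSet // u ∈ (e : Sym2 (Fin n))}
      = Fintype.card {e : Sym2 (Fin n) // e ∈ (⊤ : SimpleGraph (Fin n)).edgeSet ∧ u ∈ e} :=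
        Fintype.card_congr (Equiv.subtypeSubtypeEquivSubtypeInter
          (· ∈ (⊤ : SimpleGraph (Fin n)).edgeSet) (u ∈ ·))
    _ = Fintype.card ((⊤ : SimpleGraph (Fin n)).incidenceSet u) := Fintype.card_congr' rfl
    _ = (⊤ : SimpleGraph (Fin n)).degree u := by
        rw [SimpleGraph.card_incidenceSet_eq_degree]
    _ = n - 1 := by simp

lemma auxCardMemPair (n : ℕ) (a b : Fin n) (hab : a ≠ b) :
    Fintype.card {u : Fin n // u ∈ (s(a,b) : Sym2 (Fin n))} = 2 := by
  have h : {u : Fin n | u ∈ (s(a,b) : Sym2 (Fin n))} = {a, b} := by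
    ext u; simp [Sym2.mem_iff, eq_comm]
  calc Fintype.card {u : Fin n // u ∈ (s(a,b) : Sym2 (Fin n))}
      = Fintype.card ↥({a, b} : Set (Fin n)) := Fintype.card_congr' (by rw [← h]; rfl)
    _ = 2 := by rw [← Set.toFinset_card]; simp [hab]

lemma auxCardAdjEdge (n : ℕ) (hn : 2 ≤ n) (a b : Fin n) (hab : a ≠ b)
    (he : (s(a,b) : Sym2 (Fin n)) ∈ (⊤ : SimpleGraph (Fin n)).edgeSet) :
    Fintype.card {f : ↥(⊤ : SimpleGraph (Fin n)).edgeSet //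
      (⟨s(a,b), he⟩ : ↥(⊤ : SimpleGraph (Fin n)).edgeSet) ≠ f ∧
      ∃ v, v ∈ (s(a,b) : Sym2 (Fin n)) ∧ v ∈ (f : Sym2 (Fin n))} = 2 * n - 4 := by
  classical
  set P : Sym2 (Fin n) → Prop :=
    fun g => g ≠ s(a,b) ∧ ∃ v, v ∈ (s(a,b) : Sym2 (Fin n)) ∧ v ∈ g with hP
  have step1 : Fintype.card {f : ↥(⊤ : SimpleGraph (Fin n)).edgeSet //
        (⟨s(a,b), he⟩ : ↥(⊤ : SimpleGraph (Fin n)).edgeSet) ≠ f ∧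
        ∃ v, v ∈ (s(a,b) : Sym2 (Fin n)) ∧ v ∈ (f : Sym2 (Fin n))}
      = Fintype.card {f : ↥(⊤ : SimpleGraph (Fin n)).edgeSet // P ↑f} := by
    apply Fintype.card_congr
    apply Equiv.subtypeEquivRight
    intro f
    simp [hP, Ne, Subtype.ext_iff, eq_comm]
  rw [step1, Fintype.card_congr (Equiv.subtypeSubtypeEquivSubtypeInter
      (· ∈ (⊤ : SimpleGraph (Fin n)).edgeSet) P), Fintype.card_subtype]
  have hfilter : (univ.filter fun g => g ∈ (⊤ : SimpleGraph (Fin n)).edgeSet ∧ P g)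
      = ((⊤ : SimpleGraph (Fin n)).incidenceFinset a ∪
          (⊤ : SimpleGraph (Fin n)).incidenceFinset b).erase s(a,b) := by
    ext g
    simp only [mem_filter, mem_univ, true_and, mem_erase, mem_union,
      SimpleGraph.mem_incidenceFinset, SimpleGraph.incidenceSet, Set.mem_setOf_eq, hP]
    constructor
    · rintro ⟨hg, hne, v, hv1, hv2⟩
      refine ⟨hne, ?_⟩
      rcases Sym2.mem_iff.mp hv1 with rfl | rfl
      · exact Or.inl ⟨hg, hv2⟩
      · exact Or.inr ⟨hg, hv2⟩
    · rintro ⟨hne, (⟨hg, hv⟩ | ⟨hg, hv⟩)⟩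
      · exact ⟨hg, hne, a, by simp, hv⟩
      · exact ⟨hg, hne, b, by simp, hv⟩
  rw [hfilter]
  have hmem : (s(a,b) : Sym2 (Fin n)) ∈ (⊤ : SimpleGraph (Fin n)).incidenceFinset a ∪
      (⊤ : SimpleGraph (Fin n)).incidenceFinset b := by
    simp [SimpleGraph.mem_incidenceFinset, SimpleGraph.incidenceSet, he, hab]
  have hinter : (⊤ : SimpleGraph (Fin n)).incidenceFinset a ∩
      (⊤ : SimpleGraph (Fin n)).incidenceFinset b = {s(a,b)} := by
    ext g
    simp only [mem_inter, SimpleGraph.mem_incidenceFinset, SimpleGraph.incidenceSet,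
      Set.mem_setOf_eq, mem_singleton]
    constructor
    · rintro ⟨⟨hg, ha⟩, ⟨_, hb⟩⟩
      exact (Sym2.mem_and_mem_iff hab).mp ⟨ha, hb⟩
    · rintro rfl
      exact ⟨⟨he, by simp⟩, ⟨he, by simp⟩⟩
  have hcard : #((⊤ : SimpleGraph (Fin n)).incidenceFinset a ∪
      (⊤ : SimpleGraph (Fin n)).incidenceFinset b) = 2 * n - 3 := by
    have h1 := Finset.card_union_add_card_inter ((⊤ : SimpleGraph (Fin n)).incidenceFinset a)
      ((⊤ : SimpleGraph (Fin n)).incidenceFinset b)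
    have hda : (⊤ : SimpleGraph (Fin n)).degree a = n - 1 := by simp
    have hdb : (⊤ : SimpleGraph (Fin n)).degree b = n - 1 := by simp
    rw [hinter, SimpleGraph.card_incidenceFinset_eq_degree,
      SimpleGraph.card_incidenceFinset_eq_degree, hda, hdb, card_singleton] at h1
    omega
  rw [Finset.card_erase_of_mem hmem, hcard]
  omega

lemma auxTotalDegree (n : ℕ) (hn : 2 ≤ n)
    (x : Fin n ⊕ ↥(⊤ : SimpleGraph (Fin n)).edgeSet) :
    (⊤ : SimpleGraph (Fin n)).totalGraph.degree x = 2 * n - 2 := by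
  classical
  set T := (⊤ : SimpleGraph (Fin n)).totalGraph with hT
  have h0 : T.degree x = Fintype.card {y // T.Adj x y} := by
    rw [← T.card_neighborSet_eq_degree x]
    exact Fintype.card_congr' rfl
  rw [h0, Fintype.card_congr (Equiv.subtypeSum), Fintype.card_sum]
  obtain u | ⟨e, he⟩ := x
  · have h1 : Fintype.card {a : Fin n // T.Adj (Sum.inl u) (Sum.inl a)} = n - 1 := by
      rw [Fintype.card_congr' (α := {a : Fin n // T.Adj (Sum.inl u) (Sum.inl a)})
        (β := {v : Fin n // (⊤ : SimpleGraph (Fin n)).Adj u v}) rfl]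
      exact auxCardAdjVert n u
    have h2 : Fintype.card {e : ↥(⊤ : SimpleGraph (Fin n)).edgeSet //
        T.Adj (Sum.inl u) (Sum.inr e)} = n - 1 :=
      (Fintype.card_congr (Equiv.subtypeEquivRight
        (p := fun e : ↥(⊤ : SimpleGraph (Fin n)).edgeSet => T.Adj (Sum.inl u) (Sum.inr e))
        (q := fun e : ↥(⊤ : SimpleGraph (Fin n)).edgeSet => u ∈ (e : Sym2 (Fin n)))
        fun e => Iff.rfl)).trans (auxCardIncEdge n u)
    rw [h1, h2]; omega
  · induction e using Sym2.ind with
    | _ a b =>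
      have hab : a ≠ b := by simpa using he
      have h1 : Fintype.card {u : Fin n //
          T.Adj (Sum.inr ⟨s(a,b), he⟩) (Sum.inl u)} = 2 :=
        (Fintype.card_congr (Equiv.subtypeEquivRight
          (p := fun u : Fin n => T.Adj (Sum.inr ⟨s(a,b), he⟩) (Sum.inl u))
          (q := fun u : Fin n => u ∈ (s(a,b) : Sym2 (Fin n)))
          fun u => Iff.rfl)).trans (auxCardMemPair n a b hab)
      have h2 : Fintype.card {f : ↥(⊤ : SimpleGraph (Fin n)).edgeSet //
          T.Adj (Sum.inr ⟨s(a,b), he⟩) (Sum.inr f)} = 2 * n - 4 :=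
        (Fintype.card_congr (Equiv.subtypeEquivRight
          (p := fun f : ↥(⊤ : SimpleGraph (Fin n)).edgeSet => T.Adj (Sum.inr ⟨s(a,b), he⟩) (Sum.inr f))
          (q := fun f : ↥(⊤ : SimpleGraph (Fin n)).edgeSet =>
            (⟨s(a,b), he⟩ : ↥(⊤ : SimpleGraph (Fin n)).edgeSet) ≠ f ∧
            ∃ v, v ∈ (s(a,b) : Sym2 (Fin n)) ∧ v ∈ (f : Sym2 (Fin n)))
          fun f => Iff.rfl)).trans (auxCardAdjEdge n hn a b hab he)
      rw [h1, h2]; omega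

end Aux

/-- For the complete graph `K_n` on `n ≥ 2` vertices, `H(T(K_n)) = n(n + 1)/4`. -/
theorem harmonicIndex_totalGraph_completeGraph (n : ℕ) (hn : 2 ≤ n) :
    (⊤ : SimpleGraph (Fin n)).totalGraph.harmonicIndex
      = (n : ℝ) * ((n : ℝ) + 1) / 4 := by
  classical
  set T := (⊤ : SimpleGraph (Fin n)).totalGraph with hT
  have hdeg := auxTotalDegree n hn
  -- every term of the sum is the same constant
  have hterm : ∀ e ∈ T.edgeFinset,
      Sym2.lift ⟨fun u v => 2 / ((T.degree u : ℝ) + (T.degree v : ℝ)),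
        fun u v => by simp [add_comm]⟩ e
      = 2 / (((2 * n - 2 : ℕ) : ℝ) + ((2 * n - 2 : ℕ) : ℝ)) := by
    intro e _
    induction e using Sym2.ind with
    | _ x y =>
      have hx : T.degree x = 2 * n - 2 := by convert hdeg x
      have hy : T.degree y = 2 * n - 2 := by convert hdeg y
      simp [Sym2.lift_mk, hx, hy]
  rw [SimpleGraph.harmonicIndex, Finset.sum_congr rfl hterm, Finset.sum_const,
    nsmul_eq_mul]
  -- handshake: 2 * |E| = |V| * (2n-2)
  have hhs : 2 * T.edgeFinset.card = (n + Fintype.card ↥(⊤ : SimpleGraph (Fin n)).edgeSet)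
      * (2 * n - 2) := by
    rw [← T.sum_degrees_eq_twice_card_edges]
    rw [Finset.sum_congr rfl fun v _ => hdeg v, Finset.sum_const, smul_eq_mul,
      Finset.card_univ, Fintype.card_sum, Fintype.card_fin]
  have hE : Fintype.card ↥(⊤ : SimpleGraph (Fin n)).edgeSet = n.choose 2 := by
    rw [← Set.toFinset_card]
    rw [show ((⊤ : SimpleGraph (Fin n)).edgeSet).toFinset
        = (⊤ : SimpleGraph (Fin n)).edgeFinset from rfl]
    rw [SimpleGraph.card_edgeFinset_top_eq_card_choose_two, Fintype.card_fin]
  rw [hE] at hhs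
  -- now pure arithmetic over ℝ
  have hcast : ((2 * n - 2 : ℕ) : ℝ) = 2 * (n : ℝ) - 2 := by
    have : (2 : ℕ) ≤ 2 * n := by omega
    push_cast [Nat.cast_sub this]
    ring
  have hEcard : (T.edgeFinset.card : ℝ) = ((n : ℝ) + (n : ℝ) * ((n : ℝ) - 1) / 2)
      * (2 * (n : ℝ) - 2) / 2 := by
    have := congrArg (fun m : ℕ => (m : ℝ)) hhs
    push_cast [Nat.cast_choose_two] at this
    rw [hcast] at this
    linarith
  rw [hEcard, hcast]
  have hne : (2 * (n : ℝ) - 2) ≠ 0 := by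
    have : (2 : ℝ) ≤ (n : ℝ) := by exact_mod_cast hn
    nlinarith
  have key : ∀ A d : ℝ, d ≠ 0 → A * d / 2 * (2 / (d + d)) = A / 2 := by
    intro A d hd
    have hd2 : (2:ℝ) * (2 * d) ≠ 0 := mul_ne_zero two_ne_zero (mul_ne_zero two_ne_zero hd)
    rw [show d + d = 2 * d by ring, div_mul_div_comm, div_eq_div_iff hd2 two_ne_zero]
    ring
  rw [key _ _ hne]
  ring
end
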